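/- arXiv:2509.15025 — 5 statements merged into one kernel-verified Lean document; each statement's English description precedes it below -/
import Mathlib

section
/- For the Blahut–Arimoto-type iteration, for all k ≥ 0 and any pair (P_{Z|XT}, Q_{Z|X}) with Q_{Z|X} = Q(P_{Z|XT}): D(Q_{Z|X} ∥ Q^{(k)} | P_X) − D(Q_{Z|X} ∥ Q^{(k+1)} | P_X) = F_μ(P^{(k+1)}, Q^{(k)}) − F_μ(P_{Z|XT}, Q_{Z|X}) + E[D(P_{T|XZ}(·|X,Z) ∥ P^{(k+1)}_{T|XZ}(·|X,Z))], where P_{T|XZ} denotes the backward conditional P_{T|XZ} = P_{Z|XT} P_{T|X} / Q_{Z|X}. -/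
open Finset

/-- Marginal channel `P_{T|X}(t|x) = ∑_s P_S(s) P_{T|XS}(t|x,s)`. -/
noncomputable def pTX {X S T : Type} [Fintype S]
    (pS : S → ℝ) (pTXS : X → S → T → ℝ) (x : X) (t : T) : ℝ :=
  ∑ s, pS s * pTXS x s t

/-- Joint law of (X,T). -/
noncomputable def pXT {X S T : Type} [Fintype S]
    (pX : X → ℝ) (pS : S → ℝ) (pTXS : X → S → T → ℝ) (x : X) (t : T) : ℝ :=
  pX x * pTX pS pTXS x t

/-- `F_μ(P_{Z|XT}, Q_{Z|X}) = D(P_{Z|XT} ∥ Q_{Z|X} | P_{XT}) − μ E[d(S,Z)]`. -/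
noncomputable def Fmu {X S T Z : Type} [Fintype X] [Fintype S] [Fintype T] [Fintype Z]
    (μ : ℝ) (pX : X → ℝ) (pS : S → ℝ) (pTXS : X → S → T → ℝ) (d : S → Z → ℝ)
    (P : X → T → Z → ℝ) (Q : X → Z → ℝ) : ℝ :=
  (∑ x, ∑ t, pXT pX pS pTXS x t * ∑ z, P x t z * Real.log (P x t z / Q x z))
    - μ * ∑ x, ∑ s, ∑ t, ∑ z, pX x * pS s * pTXS x s t * P x t z * d s z

/-- Posterior expectation `E[d(S,z)|x,t]`. -/
noncomputable def condExpD {X S T Z : Type} [Fintype S]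
    (pS : S → ℝ) (pTXS : X → S → T → ℝ) (d : S → Z → ℝ) (x : X) (t : T) (z : Z) : ℝ :=
  ∑ s, (pS s * pTXS x s t / ∑ s', pS s' * pTXS x s' t) * d s z

/-- The Gibbs-type update `P(Q)`. -/
noncomputable def updP {X S T Z : Type} [Fintype S] [Fintype Z]
    (μ : ℝ) (pS : S → ℝ) (pTXS : X → S → T → ℝ) (d : S → Z → ℝ)
    (Q : X → Z → ℝ) (x : X) (t : T) (z : Z) : ℝ :=
  Q x z * Real.exp (μ * condExpD pS pTXS d x t z) /
    ∑ a, Q x a * Real.exp (μ * condExpD pS pTXS d x t a)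

/-- The marginal update `Q(P)`. -/
noncomputable def updQ {X S T Z : Type} [Fintype S] [Fintype T]
    (pS : S → ℝ) (pTXS : X → S → T → ℝ) (P : X → T → Z → ℝ) (x : X) (z : Z) : ℝ :=
  ∑ t, ∑ s, pS s * pTXS x s t * P x t z

/-- Backward conditional `P_{T|XZ}(t|x,z) = P_{Z|XT}(z|x,t) P_{T|X}(t|x) / Q_{Z|X}(z|x)`. -/
noncomputable def bwd {X S T Z : Type} [Fintype S]
    (pS : S → ℝ) (pTXS : X → S → T → ℝ)
    (P : X → T → Z → ℝ) (Q : X → Z → ℝ) (x : X) (z : Z) (t : T) : ℝ :=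
  P x t z * pTX pS pTXS x t / Q x z

/-- Conditional KL divergence `D(Q ∥ Q' | P_X)` for conditionals on Z given X. -/
noncomputable def condKLQ {X Z : Type} [Fintype X] [Fintype Z]
    (pX : X → ℝ) (Q Q' : X → Z → ℝ) : ℝ :=
  ∑ x, pX x * ∑ z, Q x z * Real.log (Q x z / Q' x z)


section Aux

variable {X S T Z : Type} [Fintype X] [Fintype S] [Fintype T] [Fintype Z]

lemma updQ_eq (pS : S → ℝ) (pTXS : X → S → T → ℝ) (P : X → T → Z → ℝ) (x : X) (z : Z) :
    updQ pS pTXS P x z = ∑ t, pTX pS pTXS x t * P x t z := by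
  unfold updQ pTX
  refine Finset.sum_congr rfl fun t _ => ?_
  rw [Finset.sum_mul]

lemma muterm (pX : X → ℝ) (pS : S → ℝ) (pTXS : X → S → T → ℝ) (d : S → Z → ℝ)
    (hpTXpos : ∀ x t, 0 < pTX pS pTXS x t) (P' : X → T → Z → ℝ) :
    ∑ x, ∑ s, ∑ t, ∑ z, pX x * pS s * pTXS x s t * P' x t z * d s z
      = ∑ x, ∑ t, ∑ z, pX x * pTX pS pTXS x t * P' x t z * condExpD pS pTXS d x t z := by
  refine Finset.sum_congr rfl fun x _ => ?_
  rw [Finset.sum_comm]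
  refine Finset.sum_congr rfl fun t _ => ?_
  rw [Finset.sum_comm]
  refine Finset.sum_congr rfl fun z _ => ?_
  have hw : pTX pS pTXS x t ≠ 0 := (hpTXpos x t).ne'
  unfold condExpD
  rw [Finset.mul_sum]
  refine Finset.sum_congr rfl fun s _ => ?_
  unfold pTX at hw ⊢
  field_simp

end Aux

/-- the key identity of the BA convergence proof: for all `k ≥ 0` and any
pair `(P, Q)` with `Q = Q(P)`,
`D(Q ∥ Q^{(k)} | P_X) − D(Q ∥ Q^{(k+1)} | P_X)
 = F_μ(P^{(k+1)}, Q^{(k)}) − F_μ(P, Q) + E[D(P_{T|XZ}(·|X,Z) ∥ P^{(k+1)}_{T|XZ}(·|X,Z))]`,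
where the backward conditionals are `P_{T|XZ} = P_{Z|XT} P_{T|X} / Q_{Z|X}` and the outer
expectation is over `(X,Z) ~ P_X Q_{Z|X}`. -/
theorem stmt5 {X S T Z : Type} [Fintype X] [Fintype S] [Fintype T] [Fintype Z]
    (μ : ℝ) (hμ : μ ≤ 0)
    (pX : X → ℝ) (pS : S → ℝ) (pTXS : X → S → T → ℝ) (d : S → Z → ℝ)
    (hpX : ∀ x, 0 ≤ pX x) (hpXsum : ∑ x, pX x = 1)
    (hpS : ∀ s, 0 ≤ pS s) (hpSsum : ∑ s, pS s = 1)
    (hpTXS : ∀ x s t, 0 ≤ pTXS x s t) (hpTXSsum : ∀ x s, ∑ t, pTXS x s t = 1)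
    (hpTXpos : ∀ x t, 0 < pTX pS pTXS x t)
    (hd : ∀ s z, 0 ≤ d s z)
    (Qseq : ℕ → X → Z → ℝ) (Pseq : ℕ → X → T → Z → ℝ)
    (hQ0pos : ∀ x z, 0 < Qseq 0 x z) (hQ0sum : ∀ x, ∑ z, Qseq 0 x z = 1)
    (hPrec : ∀ k, Pseq (k + 1) = updP μ pS pTXS d (Qseq k))
    (hQrec : ∀ k, Qseq (k + 1) = updQ pS pTXS (Pseq (k + 1))) :
    ∀ k, ∀ P : X → T → Z → ℝ, ∀ Q : X → Z → ℝ,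
      (∀ x t z, 0 < P x t z) → (∀ x t, ∑ z, P x t z = 1) →
      Q = updQ pS pTXS P →
      condKLQ pX Q (Qseq k) - condKLQ pX Q (Qseq (k + 1)) =
        Fmu μ pX pS pTXS d (Pseq (k + 1)) (Qseq k) - Fmu μ pX pS pTXS d P Q
          + ∑ x, ∑ z, pX x * Q x z *
              ∑ t, bwd pS pTXS P Q x z t *
                Real.log (bwd pS pTXS P Q x z t /
                  bwd pS pTXS (Pseq (k + 1)) (Qseq (k + 1)) x z t) := by
  intro k P Q hPpos hPsum hQdef
  -- nonemptiness of all types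
  have hxu : (Finset.univ : Finset X).Nonempty := by
    rcases (Finset.univ : Finset X).eq_empty_or_nonempty with h | h
    · rw [h, Finset.sum_empty] at hpXsum; norm_num at hpXsum
    · exact h
  obtain ⟨x0, -⟩ := hxu
  have hsu : (Finset.univ : Finset S).Nonempty := by
    rcases (Finset.univ : Finset S).eq_empty_or_nonempty with h | h
    · rw [h, Finset.sum_empty] at hpSsum; norm_num at hpSsum
    · exact h
  obtain ⟨s0, -⟩ := hsu
  have htu : (Finset.univ : Finset T).Nonempty := by
    rcases (Finset.univ : Finset T).eq_empty_or_nonempty with h | h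
    · have := hpTXSsum x0 s0; rw [h, Finset.sum_empty] at this; norm_num at this
    · exact h
  obtain ⟨t0, -⟩ := htu
  have hzu : (Finset.univ : Finset Z).Nonempty := by
    rcases (Finset.univ : Finset Z).eq_empty_or_nonempty with h | h
    · have := hQ0sum x0; rw [h, Finset.sum_empty] at this; norm_num at this
    · exact h
  obtain ⟨z0, -⟩ := hzu
  haveI : Nonempty T := ⟨t0⟩
  haveI : Nonempty Z := ⟨z0⟩
  -- positivity of the iterates
  have hQkposAll : ∀ m x z, 0 < Qseq m x z := by
    intro m
    induction m with
    | zero => exact hQ0pos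
    | succ n ih =>
      intro x z
      rw [hQrec n, updQ_eq]
      refine Finset.sum_pos (fun t _ => mul_pos (hpTXpos x t) ?_) Finset.univ_nonempty
      rw [hPrec n]
      exact div_pos (mul_pos (ih x z) (Real.exp_pos _))
        (Finset.sum_pos (fun a _ => mul_pos (ih x a) (Real.exp_pos _)) Finset.univ_nonempty)
  -- the partition function
  obtain ⟨lam, hlamdef⟩ : ∃ f : X → T → ℝ,
      f = fun x t => ∑ a, Qseq k x a * Real.exp (μ * condExpD pS pTXS d x t a) := ⟨_, rfl⟩
  have hlampos : ∀ x t, 0 < lam x t := by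
    intro x t
    rw [hlamdef]
    exact Finset.sum_pos (fun a _ => mul_pos (hQkposAll k x a) (Real.exp_pos _))
      Finset.univ_nonempty
  have hPk1def : ∀ x t z, Pseq (k + 1) x t z
      = Qseq k x z * Real.exp (μ * condExpD pS pTXS d x t z) / lam x t := by
    intro x t z
    rw [hPrec k, hlamdef]
    rfl
  have hPk1pos : ∀ x t z, 0 < Pseq (k + 1) x t z := by
    intro x t z
    rw [hPk1def]
    exact div_pos (mul_pos (hQkposAll k x z) (Real.exp_pos _)) (hlampos x t)
  have hPk1sum : ∀ x t, ∑ z, Pseq (k + 1) x t z = 1 := by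
    intro x t
    have hnum : ∑ z, Qseq k x z * Real.exp (μ * condExpD pS pTXS d x t z) = lam x t := by
      rw [hlamdef]
    simp only [hPk1def]
    rw [← Finset.sum_div, hnum, div_self (hlampos x t).ne']
  have hlogPk1 : ∀ x t z, Real.log (Pseq (k + 1) x t z)
      = Real.log (Qseq k x z) + μ * condExpD pS pTXS d x t z - Real.log (lam x t) := by
    intro x t z
    rw [hPk1def x t z,
      Real.log_div (mul_pos (hQkposAll k x z) (Real.exp_pos _)).ne' (hlampos x t).ne',
      Real.log_mul (hQkposAll k x z).ne' (Real.exp_ne_zero _), Real.log_exp]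
  have hQz : ∀ x z, Q x z = ∑ t, pTX pS pTXS x t * P x t z := by
    intro x z
    rw [hQdef]
    exact updQ_eq _ _ _ _ _
  have hQpos : ∀ x z, 0 < Q x z := by
    intro x z
    rw [hQz]
    exact Finset.sum_pos (fun t _ => mul_pos (hpTXpos x t) (hPpos x t z)) Finset.univ_nonempty
  -- L1
  have L1 : condKLQ pX Q (Qseq k) - condKLQ pX Q (Qseq (k + 1))
      = ∑ x, ∑ t, ∑ z, pX x * pTX pS pTXS x t * P x t z *
          (Real.log (Qseq (k + 1) x z) - Real.log (Qseq k x z)) := by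
    unfold condKLQ
    rw [← Finset.sum_sub_distrib]
    refine Finset.sum_congr rfl fun x _ => ?_
    conv_rhs => rw [Finset.sum_comm]
    rw [← mul_sub, ← Finset.sum_sub_distrib, Finset.mul_sum]
    refine Finset.sum_congr rfl fun z _ => ?_
    have h1 : Q x z * Real.log (Q x z / Qseq k x z) - Q x z * Real.log (Q x z / Qseq (k + 1) x z)
        = Q x z * (Real.log (Qseq (k + 1) x z) - Real.log (Qseq k x z)) := by
      rw [Real.log_div (hQpos x z).ne' (hQkposAll k x z).ne',
        Real.log_div (hQpos x z).ne' (hQkposAll (k + 1) x z).ne']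
      ring
    rw [h1, hQz x z, Finset.sum_mul, Finset.mul_sum]
    refine Finset.sum_congr rfl fun t _ => ?_
    ring
  -- L2a
  have L2a : Fmu μ pX pS pTXS d (Pseq (k + 1)) (Qseq k)
      = ∑ x, ∑ t, pX x * pTX pS pTXS x t * (-(Real.log (lam x t))) := by
    unfold Fmu
    rw [muterm pX pS pTXS d hpTXpos (Pseq (k + 1)), Finset.mul_sum, ← Finset.sum_sub_distrib]
    refine Finset.sum_congr rfl fun x _ => ?_
    rw [Finset.mul_sum, ← Finset.sum_sub_distrib]
    refine Finset.sum_congr rfl fun t _ => ?_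
    simp only [pXT]
    have h2 : (∑ z, Pseq (k + 1) x t z * Real.log (Pseq (k + 1) x t z / Qseq k x z))
        = ∑ z, Pseq (k + 1) x t z *
            (μ * condExpD pS pTXS d x t z - Real.log (lam x t)) := by
      refine Finset.sum_congr rfl fun z _ => ?_
      rw [Real.log_div (hPk1pos x t z).ne' (hQkposAll k x z).ne', hlogPk1 x t z]
      ring
    rw [h2, Finset.mul_sum, Finset.mul_sum, ← Finset.sum_sub_distrib]
    have h3 : ∀ z, pX x * pTX pS pTXS x t *
          (Pseq (k + 1) x t z * (μ * condExpD pS pTXS d x t z - Real.log (lam x t)))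
        - μ * (pX x * pTX pS pTXS x t * Pseq (k + 1) x t z * condExpD pS pTXS d x t z)
        = Pseq (k + 1) x t z * (pX x * pTX pS pTXS x t * (-(Real.log (lam x t)))) :=
      fun z => by ring
    rw [Finset.sum_congr rfl fun z _ => h3 z, ← Finset.sum_mul, hPk1sum x t, one_mul]
  -- L2b
  have L2b : (∑ x, ∑ t, pX x * pTX pS pTXS x t * (-(Real.log (lam x t))))
      = ∑ x, ∑ t, ∑ z, pX x * pTX pS pTXS x t * P x t z * (-(Real.log (lam x t))) := by
    refine Finset.sum_congr rfl fun x _ => Finset.sum_congr rfl fun t _ => ?_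
    have h4 : (∑ z, pX x * pTX pS pTXS x t * P x t z * (-(Real.log (lam x t))))
        = (∑ z, P x t z) * (pX x * pTX pS pTXS x t * (-(Real.log (lam x t)))) := by
      rw [Finset.sum_mul]
      exact Finset.sum_congr rfl fun z _ => by ring
    rw [h4, hPsum x t, one_mul]
  -- L3
  have L3 : Fmu μ pX pS pTXS d P Q
      = (∑ x, ∑ t, ∑ z, pX x * pTX pS pTXS x t * P x t z *
          (Real.log (P x t z) - Real.log (Q x z)))
        - μ * ∑ x, ∑ t, ∑ z, pX x * pTX pS pTXS x t * P x t z * condExpD pS pTXS d x t z := by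
    unfold Fmu
    rw [muterm pX pS pTXS d hpTXpos P]
    congr 1
    refine Finset.sum_congr rfl fun x _ => Finset.sum_congr rfl fun t _ => ?_
    simp only [pXT]
    rw [Finset.mul_sum]
    refine Finset.sum_congr rfl fun z _ => ?_
    rw [Real.log_div (hPpos x t z).ne' (hQpos x z).ne']
    ring
  -- L4
  have L4 : (∑ x, ∑ z, pX x * Q x z *
        ∑ t, bwd pS pTXS P Q x z t *
          Real.log (bwd pS pTXS P Q x z t /
            bwd pS pTXS (Pseq (k + 1)) (Qseq (k + 1)) x z t))
      = ∑ x, ∑ t, ∑ z, pX x * pTX pS pTXS x t * P x t z *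
          (Real.log (P x t z) - Real.log (Q x z) - Real.log (Pseq (k + 1) x t z)
            + Real.log (Qseq (k + 1) x z)) := by
    refine Finset.sum_congr rfl fun x _ => ?_
    conv_rhs => rw [Finset.sum_comm]
    refine Finset.sum_congr rfl fun z _ => ?_
    rw [Finset.mul_sum]
    refine Finset.sum_congr rfl fun t _ => ?_
    unfold bwd
    have hQne : Q x z ≠ 0 := (hQpos x z).ne'
    have hQk1ne : Qseq (k + 1) x z ≠ 0 := (hQkposAll (k + 1) x z).ne'
    have hwne : pTX pS pTXS x t ≠ 0 := (hpTXpos x t).ne'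
    have hPne : P x t z ≠ 0 := (hPpos x t z).ne'
    have hPk1ne : Pseq (k + 1) x t z ≠ 0 := (hPk1pos x t z).ne'
    rw [Real.log_div (div_ne_zero (mul_ne_zero hPne hwne) hQne)
        (div_ne_zero (mul_ne_zero hPk1ne hwne) hQk1ne),
      Real.log_div (mul_ne_zero hPne hwne) hQne,
      Real.log_div (mul_ne_zero hPk1ne hwne) hQk1ne,
      Real.log_mul hPne hwne, Real.log_mul hPk1ne hwne]
    field_simp
    ring
  rw [L1, L2a, L2b, L3, L4]
  simp only [Finset.mul_sum, ← Finset.sum_sub_distrib, ← Finset.sum_add_distrib]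
  refine Finset.sum_congr rfl fun x _ => Finset.sum_congr rfl fun t _ =>
    Finset.sum_congr rfl fun z _ => ?_
  rw [hlogPk1 x t z]
  ring
end

section
/- Converse change-of-measure bound: let W ∈ {1,…,K} and suppose the Markov chain T — (X,W) — Z holds via encoder P_{W|XT} and decoder P_{Z|W}, with j(t|z,x) = log(P_{T|ZX}(t|z,x)/P_{T|X}(t|x)). Then for any γ > 0, P[ j(T|Z,X) > log K + γ ] ≤ exp(−γ). -/
open Finset

/-- converse change-of-measure bound. With `W ∈ [K]` generated from `(X,T)`
by an encoder `P_{W|XT}` and `Z` generated from `W` by a decoder `P_{Z|W}` (so the Markov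
chain `T — (X,W) — Z` holds), and
`j(t|z,x) = log(P_{T|ZX}(t|z,x)/P_{T|X}(t|x))`, for any `γ > 0` we have
`P[ j(T|Z,X) > log K + γ ] ≤ exp(−γ)`. -/
theorem stmt8 {X T Z : Type} [Fintype X] [Fintype T] [Fintype Z]
    (K : ℕ) (hK : 0 < K)
    (pX : X → ℝ) (pTX : X → T → ℝ)
    (enc : X → T → Fin K → ℝ) (dec : Fin K → Z → ℝ)
    (hpX : ∀ x, 0 ≤ pX x) (hpXsum : ∑ x, pX x = 1)
    (hpTX : ∀ x t, 0 ≤ pTX x t) (hpTXsum : ∀ x, ∑ t, pTX x t = 1)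
    (henc : ∀ x t w, 0 ≤ enc x t w) (hencsum : ∀ x t, ∑ w, enc x t w = 1)
    (hdec : ∀ w z, 0 ≤ dec w z) (hdecsum : ∀ w, ∑ z, dec w z = 1)
    (γ : ℝ) (hγ : 0 < γ) :
    -- joint law of (X,T,W,Z)
    let joint : X → T → Fin K → Z → ℝ := fun x t w z => pX x * pTX x t * enc x t w * dec w z
    -- marginal of (X,Z)
    let pXZ : X → Z → ℝ := fun x z => ∑ t, ∑ w, joint x t w z
    -- induced backward conditional P_{T|ZX}
    let pTZX : X → Z → T → ℝ := fun x z t => (∑ w, joint x t w z) / pXZ x z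
    -- information density j(t|z,x)
    let j : X → Z → T → ℝ := fun x z t => Real.log (pTZX x z t / pTX x t)
    (∑ x, ∑ t, ∑ w, ∑ z,
        if j x z t > Real.log K + γ then joint x t w z else 0) ≤ Real.exp (-γ) := by

  intro joint pXZ pTZX j
  have hKpos : (0:ℝ) < K := by exact_mod_cast hK
  have hjnn : ∀ x t w z, 0 ≤ joint x t w z := fun x t w z =>
    mul_nonneg (mul_nonneg (mul_nonneg (hpX x) (hpTX x t)) (henc x t w)) (hdec w z)
  have hqnn : ∀ x t z, 0 ≤ ∑ w, joint x t w z :=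
    fun x t z => Finset.sum_nonneg fun w _ => hjnn x t w z
  have hXZnn : ∀ x z, 0 ≤ pXZ x z :=
    fun x z => Finset.sum_nonneg fun t _ => hqnn x t z
  have hTZXnn : ∀ x z t, 0 ≤ pTZX x z t := fun x z t => div_nonneg (hqnn x t z) (hXZnn x z)
  have hTZXsum : ∀ x z, ∑ t, pTZX x z t ≤ 1 := by
    intro x z
    by_cases h : pXZ x z = 0
    · have : ∀ t, pTZX x z t = 0 := fun t => by
        show (∑ w, joint x t w z) / pXZ x z = 0
        simp [h]
      simp [this]
    · have h1 : ∑ t, pTZX x z t = (∑ t, ∑ w, joint x t w z) / pXZ x z := by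
        rw [Finset.sum_div]
      have h2 : (∑ t, ∑ w, joint x t w z) = pXZ x z := rfl
      rw [h1, h2, div_self h]
  set c := Real.log K + γ with hc
  have hcpos : 0 < c := add_pos_of_nonneg_of_pos (Real.log_nonneg (by exact_mod_cast hK)) hγ
  have hexpc : Real.exp c = K * Real.exp γ := by
    rw [hc, Real.exp_add, Real.exp_log hKpos]
  have hexpnegc : Real.exp (-c) = Real.exp (-γ) / K := by
    rw [Real.exp_neg, Real.exp_neg, hexpc, mul_inv, div_eq_mul_inv, mul_comm]
  have key : ∀ x t z, (if j x z t > c then ∑ w, joint x t w z else 0)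
      ≤ pX x * (Real.exp (-γ) / K) * (∑ w, dec w z) * pTZX x z t := by
    intro x t z
    have hDnn : (0:ℝ) ≤ ∑ w, dec w z := Finset.sum_nonneg fun w _ => hdec w z
    split_ifs with h
    · have h' : c < Real.log (pTZX x z t / pTX x t) := h
      have hr0 : 0 ≤ pTZX x z t / pTX x t := div_nonneg (hTZXnn x z t) (hpTX x t)
      have hrpos : 0 < pTZX x z t / pTX x t := by
        rcases hr0.lt_or_eq with h'' | h''
        · exact h''
        · exfalso; rw [← h'', Real.log_zero] at h'; linarith
      have hec : Real.exp c < pTZX x z t / pTX x t := by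
        have := Real.exp_lt_exp.mpr h'
        rwa [Real.exp_log hrpos] at this
      have hpTXpos : 0 < pTX x t := by
        rcases (hpTX x t).lt_or_eq with h'' | h''
        · exact h''
        · exfalso; rw [← h'', div_zero] at hrpos; exact lt_irrefl _ hrpos
      have hb : pTX x t ≤ pTZX x z t * (Real.exp (-γ) / K) := by
        have h1 : Real.exp c * pTX x t < pTZX x z t := (lt_div_iff₀ hpTXpos).mp hec
        have h2 : pTX x t < pTZX x z t * Real.exp (-c) := by
          rw [Real.exp_neg, ← div_eq_mul_inv, lt_div_iff₀ (Real.exp_pos c), mul_comm]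
          exact h1
        rw [← hexpnegc]
        exact le_of_lt h2
      have hS : ∑ w, enc x t w * dec w z ≤ ∑ w, dec w z := by
        apply Finset.sum_le_sum
        intro w _
        have h1 : enc x t w ≤ 1 := by
          have := Finset.single_le_sum (f := enc x t) (fun w _ => henc x t w)
            (Finset.mem_univ w)
          rwa [hencsum x t] at this
        calc enc x t w * dec w z ≤ 1 * dec w z :=
              mul_le_mul_of_nonneg_right h1 (hdec w z)
          _ = dec w z := one_mul _
      have hSnn : (0:ℝ) ≤ ∑ w, enc x t w * dec w z :=
        Finset.sum_nonneg fun w _ => mul_nonneg (henc x t w) (hdec w z)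
      have hfac : ∑ w, joint x t w z = pX x * pTX x t * ∑ w, enc x t w * dec w z := by
        rw [Finset.mul_sum]
        exact Finset.sum_congr rfl fun w _ => by show _ * _ * _ * _ = _; ring
      rw [hfac]
      calc pX x * pTX x t * ∑ w, enc x t w * dec w z
          ≤ pX x * (pTZX x z t * (Real.exp (-γ) / K)) * ∑ w, dec w z := by
            apply mul_le_mul _ hS hSnn
            · exact mul_nonneg (hpX x) (mul_nonneg (hTZXnn x z t)
                (div_nonneg (Real.exp_nonneg _) hKpos.le))
            · exact mul_le_mul_of_nonneg_left hb (hpX x)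
        _ = pX x * (Real.exp (-γ) / K) * (∑ w, dec w z) * pTZX x z t := by ring
    · exact mul_nonneg (mul_nonneg (mul_nonneg (hpX x)
        (div_nonneg (Real.exp_nonneg _) hKpos.le)) hDnn) (hTZXnn x z t)
  calc (∑ x, ∑ t, ∑ w, ∑ z, if j x z t > c then joint x t w z else 0)
      = ∑ x, ∑ t, ∑ z, (if j x z t > c then ∑ w, joint x t w z else 0) := by
        refine Finset.sum_congr rfl fun x _ => Finset.sum_congr rfl fun t _ => ?_
        rw [Finset.sum_comm]
        refine Finset.sum_congr rfl fun z _ => ?_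
        split_ifs with h <;> simp
    _ ≤ ∑ x, ∑ t, ∑ z, pX x * (Real.exp (-γ) / K) * (∑ w, dec w z) * pTZX x z t := by
        refine Finset.sum_le_sum fun x _ => Finset.sum_le_sum fun t _ =>
          Finset.sum_le_sum fun z _ => key x t z
    _ ≤ ∑ x, ∑ z, pX x * (Real.exp (-γ) / K) * (∑ w, dec w z) := by
        refine Finset.sum_le_sum fun x _ => ?_
        rw [Finset.sum_comm]
        refine Finset.sum_le_sum fun z _ => ?_
        rw [← Finset.mul_sum]
        have hBnn : 0 ≤ pX x * (Real.exp (-γ) / K) * (∑ w, dec w z) :=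
          mul_nonneg (mul_nonneg (hpX x)
            (div_nonneg (Real.exp_nonneg _) hKpos.le))
            (Finset.sum_nonneg fun w _ => hdec w z)
        exact mul_le_of_le_one_right hBnn (hTZXsum x z)
    _ = Real.exp (-γ) := by
        have hD : ∑ z, ∑ w, dec w z = (K:ℝ) := by
          rw [Finset.sum_comm]
          simp [hdecsum]
        have : ∀ x, ∑ z, pX x * (Real.exp (-γ) / K) * (∑ w, dec w z)
            = pX x * Real.exp (-γ) := by
          intro x
          rw [← Finset.mul_sum, hD]
          field_simp
        simp only [this]
        rw [← Finset.sum_mul, hpXsum, one_mul]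
end

section
/- For the binary multiplicative channel with T = S·X, S ~ Bernoulli(q), X ~ Bernoulli with P(X=0)=p independent of S, and Hamming distortion d(s,z) = 1{s ≠ z}: the rate-distortion function of the estimator equals R(D) = (1−p)·( H_b(q) − H_b( (D − p·min{q,1−q}) / (1−p) ) ) for p·min{q,1−q} < D ≤ min{q,1−q}, where R(D) = inf over P_{Z|XT} with E[d(S,Z)] ≤ D of I(T;Z|X). -/
open Finset

/-- Binary entropy function. -/
noncomputable def binEnt (p : ℝ) : ℝ := -p * Real.log p - (1 - p) * Real.log (1 - p)

noncomputable def MIexpr (q a b c d : ℝ) : ℝ :=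
  q*a*Real.log (a/(q*a+(1-q)*c)) + (1-q)*c*Real.log (c/(q*a+(1-q)*c)) +
  q*b*Real.log (b/(q*b+(1-q)*d)) + (1-q)*d*Real.log (d/(q*b+(1-q)*d))

lemma log_ineq (j k : ℝ) (hj : 0 ≤ j) (hk : 0 < k) : j - k ≤ j * Real.log (j / k) := by
  rcases hj.eq_or_lt with h | h
  · simp [← h]; linarith
  · have h1 : Real.log (k / j) ≤ k / j - 1 := Real.log_le_sub_one_of_pos (div_pos hk h)
    have h2 : Real.log (j / k) = - Real.log (k / j) := by
      rw [← Real.log_inv, inv_div]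
    have h3 : j * (k / j) = k := by field_simp
    nlinarith [mul_le_mul_of_nonneg_left h1 h.le]

lemma term_ineq (ps w Q e : ℝ) (hps : 0 < ps) (hw : 0 ≤ w) (hQ : ps*w ≤ Q) (he : ps*w ≤ e) :
    ps*w*Real.log e - ps*w*Real.log ps + (ps*w - Q*e) ≤ ps*w*Real.log (w/Q) := by
  rcases hw.eq_or_lt with h | h
  · have hQ0 : 0 ≤ Q := by nlinarith
    have he0 : 0 ≤ e := by nlinarith
    simp [← h]
    positivity
  · have hJ : 0 < ps * w := mul_pos hps h
    have hQ0 : 0 < Q := lt_of_lt_of_le hJ hQ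
    have he0 : 0 < e := lt_of_lt_of_le hJ he
    have key := log_ineq (ps*w) (Q*e) hJ.le (mul_pos hQ0 he0)
    have h1 : Real.log (ps*w/(Q*e)) = Real.log ps + Real.log w - Real.log Q - Real.log e := by
      rw [Real.log_div (by positivity) (by positivity), Real.log_mul hps.ne' h.ne',
        Real.log_mul hQ0.ne' he0.ne']
      ring
    have h2 : Real.log (w/Q) = Real.log w - Real.log Q := Real.log_div h.ne' hQ0.ne'
    rw [h1] at key
    rw [h2]
    nlinarith [key]

lemma mul_log_le (x y : ℝ) (hx : 0 ≤ x) (hy : 0 < y) :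
    x - y ≤ x*Real.log x - x*Real.log y := by
  rcases hx.eq_or_lt with h | h
  · simp [← h]; linarith
  · have := log_ineq x y hx hy
    rw [Real.log_div h.ne' hy.ne'] at this
    nlinarith

lemma binEnt_mono (x y : ℝ) (hx : 0 ≤ x) (hxy : x ≤ y) (hy : y ≤ 1/2) (hy0 : 0 < y) :
    binEnt x ≤ binEnt y := by
  have A := mul_log_le x y hx hy0
  have B := mul_log_le (1-x) (1-y) (by linarith) (by linarith)
  have C : Real.log y ≤ Real.log (1-y) := Real.log_le_log hy0 (by linarith)
  have hprod : 0 ≤ (y - x) * (Real.log (1-y) - Real.log y) :=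
    mul_nonneg (by linarith) (by linarith)
  simp only [binEnt]
  nlinarith [A, B, hprod]

lemma MIbound (q D' a b c d : ℝ) (hq0 : 0 < q) (hq1 : q < 1)
    (ha : 0 ≤ a) (hb : 0 ≤ b) (hc : 0 ≤ c) (hd : 0 ≤ d)
    (hab : a + b = 1) (hcd : c + d = 1)
    (hD0 : 0 < D') (hDh : D' ≤ 1/2) (hdist : q*b + (1-q)*c ≤ D') :
    binEnt q - binEnt D' ≤ MIexpr q a b c d := by
  have hb' : b = 1 - a := by linarith
  have hd' : d = 1 - c := by linarith
  subst hb' hd'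
  have h1q : (0:ℝ) < 1 - q := by linarith
  have m1 : 0 ≤ (1-q)*c := mul_nonneg h1q.le hc
  have m2 : 0 ≤ (1-q)*(1-c) := mul_nonneg h1q.le hd
  have m3 : 0 ≤ q*a := mul_nonneg hq0.le ha
  have m4 : 0 ≤ q*(1-a) := mul_nonneg hq0.le hb
  have hpe0 : 0 ≤ q*(1-a) + (1-q)*c := by linarith
  have hstep2 : binEnt (q*(1-a) + (1-q)*c) ≤ binEnt D' :=
    binEnt_mono _ _ hpe0 hdist hDh hD0
  have T11 := term_ineq q a (q*a+(1-q)*c) (1-(q*(1-a)+(1-q)*c)) hq0 ha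
    (by linarith) (by linarith)
  have T10 := term_ineq q (1-a) (q*(1-a)+(1-q)*(1-c)) (q*(1-a)+(1-q)*c) hq0 hb
    (by linarith) (by linarith)
  have T01 := term_ineq (1-q) c (q*a+(1-q)*c) (q*(1-a)+(1-q)*c) h1q hc
    (by linarith) (by linarith)
  have T00 := term_ineq (1-q) (1-c) (q*(1-a)+(1-q)*(1-c)) (1-(q*(1-a)+(1-q)*c)) h1q hd
    (by linarith) (by linarith)
  have key : binEnt q - binEnt (q*(1-a) + (1-q)*c) ≤ MIexpr q a (1-a) c (1-c) := by
    simp only [MIexpr, binEnt]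
    linarith [T11, T10, T01, T00]
  linarith

lemma term_eq (ps Q e : ℝ) (hps : 0 < ps) (hQ : 0 ≤ Q) (he : 0 ≤ e) :
    ps * (Q*e/ps) * Real.log ((Q*e/ps) / Q) = Q*e*(Real.log e - Real.log ps) := by
  rcases hQ.eq_or_lt with h | h
  · simp [← h]
  rcases he.eq_or_lt with h' | h'
  · simp [← h']
  have h1 : (Q*e/ps)/Q = e/ps := by
    field_simp
  have h2 : ps*(Q*e/ps) = Q*e := by field_simp
  rw [h1, h2, Real.log_div h'.ne' hps.ne']

lemma MIach (q D' : ℝ) (hq0 : 0 < q) (hq1 : q < 1) (hD0 : 0 < D')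
    (hDq : D' ≤ q) (hDq' : D' ≤ 1 - q) :
    ∃ a b c d : ℝ, 0 ≤ a ∧ 0 ≤ b ∧ 0 ≤ c ∧ 0 ≤ d ∧ a + b = 1 ∧ c + d = 1 ∧
      q*b + (1-q)*c = D' ∧ MIexpr q a b c d = binEnt q - binEnt D' := by
  have h1q : (0:ℝ) < 1 - q := by linarith
  by_cases h : 1 - 2*D' = 0
  · -- D' = 1/2, q = 1/2
    have hq : q = 1/2 := by linarith
    have hD : D' = 1/2 := by linarith
    refine ⟨1/2, 1/2, 1/2, 1/2, by norm_num, by norm_num, by norm_num, by norm_num,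
      by norm_num, by norm_num, by rw [hq, hD]; ring, ?_⟩
    rw [hq, hD]
    simp only [MIexpr]
    norm_num
  · have hpos : 0 < 1 - 2*D' := lt_of_le_of_ne (by linarith) (Ne.symm h)
    set r : ℝ := (q - D')/(1 - 2*D') with hr
    have hr0 : 0 ≤ r := div_nonneg (by linarith) hpos.le
    have hr1 : r ≤ 1 := by rw [hr, div_le_one hpos]; linarith
    have K1 : r*(1-D') + (1-r)*D' = q := by
      have : r*(1-2*D') = q - D' := by rw [hr]; exact div_mul_cancel₀ _ hpos.ne'
      nlinarith [this]
    refine ⟨r*(1-D')/q, (1-r)*D'/q, r*D'/(1-q), (1-r)*(1-D')/(1-q),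
      div_nonneg (mul_nonneg hr0 (by linarith)) hq0.le,
      div_nonneg (mul_nonneg (by linarith) hD0.le) hq0.le,
      div_nonneg (mul_nonneg hr0 hD0.le) h1q.le,
      div_nonneg (mul_nonneg (by linarith) (by linarith)) h1q.le, ?_, ?_, ?_, ?_⟩
    · field_simp
      linarith [K1]
    · field_simp
      nlinarith [K1]
    · field_simp
      ring
    · have hden1 : q*(r*(1-D')/q) + (1-q)*(r*D'/(1-q)) = r := by
        field_simp
        ring
      have hden0 : q*((1-r)*D'/q) + (1-q)*((1-r)*(1-D')/(1-q)) = 1 - r := by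
        field_simp
        ring
      simp only [MIexpr]
      rw [hden1, hden0]
      rw [term_eq q r (1-D') hq0 hr0 (by linarith),
          term_eq (1-q) r D' h1q hr0 hD0.le,
          term_eq q (1-r) D' hq0 (by linarith) hD0.le,
          term_eq (1-q) (1-r) (1-D') h1q (by linarith) (by linarith)]
      simp only [binEnt]
      linear_combination (Real.log (1-q) - Real.log q) * K1

/-- for the binary multiplicative channel `T = S·X`, `S ~ Bernoulli(q)`,
`P_X(0) = p`, Hamming distortion: the rate-distortion function of the estimator,
`R(D) = inf { I(T;Z|X) : P_{Z|XT} with E[d(S,Z)] ≤ D }`, equals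
`(1−p)( H_b(q) − H_b((D − p·min{q,1−q})/(1−p)) )` for
`p·min{q,1−q} < D ≤ min{q,1−q}`. -/
theorem stmt10 (p q D : ℝ) (hp0 : 0 ≤ p) (hp1 : p < 1) (hq0 : 0 < q) (hq1 : q < 1)
    (hDlo : p * min q (1 - q) < D) (hDhi : D ≤ min q (1 - q)) :
    let pX : Bool → ℝ := fun x => if x then 1 - p else p
    let pS : Bool → ℝ := fun s => if s then q else 1 - q
    -- channel T = S·X , so P_{T|X}(t|x) = ∑_s P_S(s) 1{t = s·x}
    let pTX : Bool → Bool → ℝ := fun x t => ∑ s, pS s * (if t = (s && x) then 1 else 0)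
    -- conditional mutual information I(T;Z|X) for an estimator P_{Z|XT}
    let condMI : (Bool → Bool → Bool → ℝ) → ℝ := fun P =>
      ∑ x, ∑ t, ∑ z, pX x * pTX x t * P x t z *
        Real.log (P x t z / ∑ t', pTX x t' * P x t' z)
    -- expected Hamming distortion E[d(S,Z)] under P_S P_X P_{T|XS} P_{Z|XT}
    let expDist : (Bool → Bool → Bool → ℝ) → ℝ := fun P =>
      ∑ x, ∑ s, ∑ z, pX x * pS s * P x (s && x) z * (if s = z then 0 else 1)
    sInf { r : ℝ | ∃ P : Bool → Bool → Bool → ℝ,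
        (∀ x t z, 0 ≤ P x t z) ∧ (∀ x t, ∑ z, P x t z = 1) ∧
        expDist P ≤ D ∧ r = condMI P } =
      (1 - p) * (binEnt q - binEnt ((D - p * min q (1 - q)) / (1 - p))) := by
  intro pX pS pTX condMI expDist
  have h1q : (0:ℝ) < 1 - q := by linarith
  have h1p : (0:ℝ) < 1 - p := by linarith
  have hmq : min q (1-q) ≤ q := min_le_left _ _
  have hmq' : min q (1-q) ≤ 1-q := min_le_right _ _
  have hm0 : 0 < min q (1-q) := lt_min hq0 h1q
  set D' : ℝ := (D - p * min q (1 - q)) / (1 - p) with hD'def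
  have hD'0 : 0 < D' := div_pos (by linarith) h1p
  have hD'm : D' ≤ min q (1-q) := by
    rw [hD'def, div_le_iff₀ h1p]; nlinarith
  have hD'q : D' ≤ q := le_trans hD'm hmq
  have hD'q2 : D' ≤ 1 - q := le_trans hD'm hmq'
  have hD'h : D' ≤ 1/2 := by linarith
  -- reduction of condMI
  have hMI : ∀ P : Bool → Bool → Bool → ℝ, (∀ x t z, 0 ≤ P x t z) → condMI P =
      (1-p) * MIexpr q (P true true true) (P true true false)
        (P true false true) (P true false false) := by
    intro P hP0
    have key : ∀ u : ℝ, 0 ≤ u → u * Real.log (u/u) = 0 := by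
      intro u hu
      rcases hu.eq_or_lt with h|h
      · simp [← h]
      · rw [div_self h.ne', Real.log_one, mul_zero]
    simp only [condMI, pX, pS, pTX, Fintype.sum_bool, Bool.and_true, Bool.and_false, MIexpr]
    norm_num
    ring
  -- reduction of expDist
  have hDist : ∀ P : Bool → Bool → Bool → ℝ, expDist P =
      p * (q * P false false false + (1-q) * P false false true)
      + (1-p) * (q * P true true false + (1-q) * P true false true) := by
    intro P
    simp only [expDist, pX, pS, Fintype.sum_bool, Bool.and_true, Bool.and_false]
    norm_num
    ring
  -- converse : the target value is a lower bound for the set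
  have hconv : ∀ rr ∈ { r : ℝ | ∃ P : Bool → Bool → Bool → ℝ,
      (∀ x t z, 0 ≤ P x t z) ∧ (∀ x t, ∑ z, P x t z = 1) ∧
      expDist P ≤ D ∧ r = condMI P },
      (1 - p) * (binEnt q - binEnt D') ≤ rr := by
    rintro rr ⟨P, hP0, hP1, hPd, rfl⟩
    rw [hMI P hP0]
    rw [hDist P] at hPd
    have hrow0 : P false false true + P false false false = 1 := by
      have := hP1 false false; rwa [Fintype.sum_bool] at this
    have hrow1 : P true true true + P true true false = 1 := by
      have := hP1 true true; rwa [Fintype.sum_bool] at this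
    have hrow2 : P true false true + P true false false = 1 := by
      have := hP1 true false; rwa [Fintype.sum_bool] at this
    have hge : min q (1-q) ≤ q * P false false false + (1-q) * P false false true := by
      nlinarith [mul_nonneg (sub_nonneg.2 hmq) (hP0 false false false),
        mul_nonneg (sub_nonneg.2 hmq') (hP0 false false true)]
    have hdist' : q * P true true false + (1-q) * P true false true ≤ D' := by
      rw [hD'def, le_div_iff₀ h1p]
      nlinarith [mul_le_mul_of_nonneg_left hge hp0]
    have := MIbound q D' (P true true true) (P true true false)
      (P true false true) (P true false false) hq0 hq1
      (hP0 true true true) (hP0 true true false) (hP0 true false true)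
      (hP0 true false false) hrow1 hrow2 hD'0 hD'h hdist'
    nlinarith [this]
  -- achievability : the target value is attained
  obtain ⟨a, b, c, d, ha, hb, hc, hd, hab, hcd, hdd, hMIv⟩ :=
    MIach q D' hq0 hq1 hD'0 hD'q hD'q2
  set Z0 : Bool → ℝ := fun z => if q ≤ 1/2 then (if z then 0 else 1) else (if z then 1 else 0)
    with hZ0
  set P₀ : Bool → Bool → Bool → ℝ := fun x t z =>
    if x then (if t then (if z then a else b) else (if z then c else d)) else Z0 z with hP₀
  have hP0' : ∀ x t z, 0 ≤ P₀ x t z := by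
    intro x t z
    cases x <;> cases t <;> cases z <;>
      simp only [P₀, Z0, if_true, if_false, Bool.false_eq_true, Bool.true_eq_false] <;>
      first
        | assumption
        | (split_ifs <;> norm_num)
  have hP1' : ∀ x t, ∑ z, P₀ x t z = 1 := by
    intro x t
    rw [Fintype.sum_bool]
    cases x <;> cases t <;>
      simp only [P₀, Z0, if_true, if_false, Bool.false_eq_true, Bool.true_eq_false] <;>
      first
        | assumption
        | (split_ifs <;> norm_num)
  have hZmin : q * Z0 false + (1-q) * Z0 true = min q (1-q) := by
    by_cases hhalf : q ≤ 1/2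
    · rw [min_eq_left (by linarith)]
      simp only [Z0, if_pos hhalf]
      norm_num
    · rw [min_eq_right (by linarith)]
      simp only [Z0, if_neg hhalf]
      norm_num
  have hPd' : expDist P₀ = D := by
    rw [hDist P₀]
    have e1 : P₀ false false false = Z0 false := rfl
    have e2 : P₀ false false true = Z0 true := rfl
    have e3 : P₀ true true false = b := rfl
    have e4 : P₀ true false true = c := rfl
    rw [e1, e2, e3, e4, hZmin, hdd]
    rw [hD'def]
    field_simp
    ring
  have hMIval : condMI P₀ = (1 - p) * (binEnt q - binEnt D') := by
    rw [hMI P₀ hP0']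
    have e1 : P₀ true true true = a := rfl
    have e2 : P₀ true true false = b := rfl
    have e3 : P₀ true false true = c := rfl
    have e4 : P₀ true false false = d := rfl
    rw [e1, e2, e3, e4, hMIv]
  have hmem : (1 - p) * (binEnt q - binEnt D') ∈ { r : ℝ | ∃ P : Bool → Bool → Bool → ℝ,
      (∀ x t z, 0 ≤ P x t z) ∧ (∀ x t, ∑ z, P x t z = 1) ∧
      expDist P ≤ D ∧ r = condMI P } :=
    ⟨P₀, hP0', hP1', le_of_eq hPd', hMIval.symm⟩
  exact le_antisymm
    (csInf_le ⟨(1 - p) * (binEnt q - binEnt D'), hconv⟩ hmem)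
    (le_csInf ⟨_, hmem⟩ hconv)
end

section
/- Excess-distortion random-coding bound: with X^n drawn i.i.d. from P_X, codewords Z_1^n, …, Z_K^n drawn conditionally i.i.d. from P_{Z|X}^n given X^n (independent of T^n), and the minimum-excess-probability estimator, there exists a codebook such that the excess-distortion probability satisfies ε ≤ P[d(S^n, Z^n) > d] + P[ i(T^n; Z^n | X^n) > log K − γ ] + exp(−exp(γ)), where Z^n on the right-hand side is a single codeword drawn from P_{Z|XT}^n given (X^n, T^n) and i is the conditional information density. -/
open Finset
open MeasureTheory

lemma sum_fn_prod {I B : Type} [Fintype I] [DecidableEq I] [Fintype B] (g : I → B → ℝ) :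
    ∑ c : I → B, ∏ i, g i (c i) = ∏ i, ∑ b, g i b := by
  rw [Finset.prod_univ_sum, ← Fintype.piFinset_univ]

lemma exists_le_avg {A : Type} [Fintype A] [Nonempty A] (W F : A → ℝ)
    (hW : ∀ a, 0 ≤ W a) (hWs : ∑ a, W a = 1) : ∃ a, F a ≤ ∑ a, W a * F a := by
  obtain ⟨a0, -, ha0⟩ := Finset.exists_mem_eq_inf' (Finset.univ_nonempty) F
  refine ⟨a0, ?_⟩
  calc F a0 = (∑ a, W a) * (univ.inf' univ_nonempty F) := by rw [hWs, one_mul, ha0]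
    _ = ∑ a, W a * univ.inf' univ_nonempty F := by rw [Finset.sum_mul]
    _ ≤ ∑ a, W a * F a := Finset.sum_le_sum fun a _ =>
        mul_le_mul_of_nonneg_left (Finset.inf'_le F (Finset.mem_univ a)) (hW a)

lemma step_eq (a : ℝ) : (fun y : ℝ => if y < a then (1:ℝ) else 0)
    = Set.indicator (Set.Iio a) (fun _ => 1) := by
  funext y; simp [Set.indicator_apply]

lemma step_ii (a : ℝ) : IntervalIntegrable (fun y => if y < a then (1:ℝ) else 0)
    MeasureTheory.volume 0 1 := by
  rw [step_eq]
  constructor <;>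
    exact MeasureTheory.Integrable.indicator
      (MeasureTheory.integrableOn_const measure_Ioc_lt_top.ne) measurableSet_Iio

lemma step_integral {a : ℝ} (h0 : 0 ≤ a) (h1 : a ≤ 1) :
    ∫ y in (0:ℝ)..1, (if y < a then (1:ℝ) else 0) = a := by
  rw [intervalIntegral.integral_of_le zero_le_one]
  rw [step_eq, MeasureTheory.integral_indicator measurableSet_Iio]
  rw [MeasureTheory.Measure.restrict_restrict measurableSet_Iio]
  have hset : Set.Iio a ∩ Set.Ioc 0 1 = Set.Ioo 0 a := by
    ext y
    simp only [Set.mem_inter_iff, Set.mem_Iio, Set.mem_Ioc, Set.mem_Ioo]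
    constructor
    · rintro ⟨h, h2, h3⟩; exact ⟨h2, h⟩
    · rintro ⟨h2, h⟩; exact ⟨h, h2, le_trans (le_of_lt h) h1⟩
  rw [hset, MeasureTheory.setIntegral_const, Real.volume_real_Ioo_of_le h0]
  simp [ENNReal.toReal_ofReal h0]

lemma exp_convex_bound {a v : ℝ} (h0 : 0 ≤ v) (h1 : v ≤ 1) :
    Real.exp (-(a*v)) ≤ 1 - v + Real.exp (-a) := by
  have h := convexOn_exp.2 (Set.mem_univ (0:ℝ)) (Set.mem_univ (-a))
    (by linarith : (0:ℝ) ≤ 1 - v) h0 (by ring)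
  simp only [smul_eq_mul, mul_zero, Real.exp_zero, mul_one, zero_add] at h
  have h2 : v * Real.exp (-a) ≤ Real.exp (-a) := by
    nlinarith [Real.exp_pos (-a)]
  have h3 : v * -a = -(a*v) := by ring
  rw [h3] at h
  linarith

lemma chain_bound (K : ℕ) (γ u F v : ℝ) (huF : u + F = 1) (hu0 : 0 ≤ u)
    (hv0 : 0 ≤ v) (hv1 : v ≤ 1) (hFv : Real.exp γ * v ≤ (K:ℝ) * F) :
    u ^ K ≤ 1 - v + Real.exp (-Real.exp γ) := by
  have h1 : u ^ K ≤ Real.exp (-F) ^ K := by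
    refine pow_le_pow_left₀ hu0 ?_ K
    have := Real.add_one_le_exp (-F)
    linarith
  have h2 : Real.exp (-F) ^ K = Real.exp ((K:ℝ) * -F) := (Real.exp_nat_mul _ K).symm
  have h3 : Real.exp ((K:ℝ) * -F) ≤ Real.exp (-(Real.exp γ * v)) :=
    Real.exp_le_exp.mpr (by linarith)
  calc u ^ K ≤ Real.exp ((K:ℝ) * -F) := h2 ▸ h1
    _ ≤ Real.exp (-(Real.exp γ * v)) := h3
    _ ≤ 1 - v + Real.exp (-Real.exp γ) := exp_convex_bound hv0 hv1

lemma G_eq {B : Type} [Fintype B] (K : ℕ) (hne : (univ : Finset (Fin K)).Nonempty)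
    (y : ℝ) (q f : B → ℝ) :
    ∑ c : Fin K → B, (∏ k, q (c k)) *
        (if y < univ.inf' hne (fun k => f (c k)) then (1:ℝ) else 0)
      = (∑ b, q b * (if y < f b then (1:ℝ) else 0)) ^ K := by
  have h1 : ∀ c : Fin K → B, (∏ k, q (c k)) *
      (if y < univ.inf' hne (fun k => f (c k)) then (1:ℝ) else 0)
      = ∏ k, (q (c k) * (if y < f (c k) then (1:ℝ) else 0)) := by
    intro c
    have hind : (if y < univ.inf' hne (fun k => f (c k)) then (1:ℝ) else 0)
        = ∏ k, (if y < f (c k) then (1:ℝ) else 0) := by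
      by_cases h : y < univ.inf' hne (fun k => f (c k))
      · rw [if_pos h]
        rw [Finset.lt_inf'_iff] at h
        rw [Finset.prod_congr rfl fun k _ => if_pos (h k (Finset.mem_univ k))]
        simp
      · rw [if_neg h]
        rw [Finset.lt_inf'_iff] at h
        push_neg at h
        obtain ⟨k, -, hk⟩ := h
        exact (Finset.prod_eq_zero (Finset.mem_univ k)
          (if_neg (not_lt.mpr hk) : (if y < f (c k) then (1:ℝ) else 0) = 0)).symm
    rw [hind, ← Finset.prod_mul_distrib]
  simp only [h1]
  rw [sum_fn_prod (fun _ b => q b * (if y < f b then (1:ℝ) else 0))]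
  rw [Finset.prod_const, Finset.card_univ, Fintype.card_fin]

lemma ii_sum {A : Type} [Fintype A] (g : A → ℝ → ℝ)
    (h : ∀ a, IntervalIntegrable (g a) MeasureTheory.volume 0 1) :
    IntervalIntegrable (fun y => ∑ a, g a y) MeasureTheory.volume 0 1 := by
  have he : (fun y => ∑ a, g a y) = ∑ a, g a := by
    funext y; rw [Finset.sum_apply]
  rw [he]
  exact IntervalIntegrable.sum univ (fun a _ => h a)

set_option maxHeartbeats 2000000 in
lemma core {B : Type} [Fintype B] (K : ℕ) [NeZero K] (γ : ℝ)
    (hne : (univ : Finset (Fin K)).Nonempty)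
    (q P f : B → ℝ) (ι : B → Prop) [DecidablePred ι]
    (hq0 : ∀ b, 0 ≤ q b) (hq1 : ∑ b, q b = 1)
    (hP0 : ∀ b, 0 ≤ P b) (hP1 : ∑ b, P b = 1)
    (hf0 : ∀ b, 0 ≤ f b) (hf1 : ∀ b, f b ≤ 1)
    (hcm : ∀ b, ¬ ι b → P b ≤ K * Real.exp (-γ) * q b) :
    ∑ c : Fin K → B, (∏ k, q (c k)) * (univ.inf' hne fun k => f (c k)) ≤
      ∑ b, P b * f b + ∑ b, P b * (if ι b then 1 else 0) + Real.exp (-Real.exp γ) := by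
  classical
  have hV0 : ∀ c : Fin K → B, 0 ≤ univ.inf' hne fun k => f (c k) :=
    fun c => Finset.le_inf' _ _ fun k _ => hf0 _
  have hV1 : ∀ c : Fin K → B, (univ.inf' hne fun k => f (c k)) ≤ 1 := fun c => by
    obtain ⟨k, hk⟩ := hne
    exact le_trans (Finset.inf'_le _ hk) (hf1 _)
  have hW0 : ∀ c : Fin K → B, 0 ≤ ∏ k, q (c k) :=
    fun c => Finset.prod_nonneg fun k _ => hq0 _
  -- LHS = ∫ G
  have hLHS : ∑ c : Fin K → B, (∏ k, q (c k)) * (univ.inf' hne fun k => f (c k))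
      = ∫ y in (0:ℝ)..1, ∑ c : Fin K → B, (∏ k, q (c k)) *
          (if y < univ.inf' hne (fun k => f (c k)) then (1:ℝ) else 0) := by
    have hint := intervalIntegral.integral_finset_sum (μ := volume) (a := (0:ℝ)) (b := 1)
      (s := (univ : Finset (Fin K → B)))
      (f := fun c y => (∏ k, q (c k)) *
        (if y < univ.inf' hne (fun k => f (c k)) then (1:ℝ) else 0))
      (fun c _ => ((step_ii (univ.inf' hne fun k => f (c k))).const_mul (∏ k, q (c k))))
    rw [hint]
    exact (Finset.sum_congr rfl fun c _ => by
      rw [intervalIntegral.integral_const_mul, step_integral (hV0 c) (hV1 c)]).symm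
  -- pointwise bound
  have hGH : ∀ y : ℝ, (∑ c : Fin K → B, (∏ k, q (c k)) *
      (if y < univ.inf' hne (fun k => f (c k)) then (1:ℝ) else 0)) ≤
      (∑ b, P b * (if y < f b then (1:ℝ) else 0)) +
        ((∑ b, P b * (if ι b then (1:ℝ) else 0)) + Real.exp (-Real.exp γ)) := by
    intro y
    rw [G_eq]
    have huF : (∑ b, q b * (if y < f b then (1:ℝ) else 0)) +
        (∑ b, q b * (if f b ≤ y then (1:ℝ) else 0)) = 1 := by
      rw [← Finset.sum_add_distrib]
      rw [show ∑ b, (q b * (if y < f b then (1:ℝ) else 0) +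
          q b * (if f b ≤ y then (1:ℝ) else 0)) = ∑ b, q b from
        Finset.sum_congr rfl fun b _ => by
          rcases lt_or_ge y (f b) with h | h
          · rw [if_pos h, if_neg (not_le.mpr h)]; ring
          · rw [if_neg (not_lt.mpr h), if_pos h]; ring]
      exact hq1
    have hu0 : 0 ≤ ∑ b, q b * (if y < f b then (1:ℝ) else 0) :=
      Finset.sum_nonneg fun b _ => mul_nonneg (hq0 b) (by split_ifs <;> norm_num)
    have hv0 : 0 ≤ ∑ b, P b * (if f b ≤ y ∧ ¬ ι b then (1:ℝ) else 0) :=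
      Finset.sum_nonneg fun b _ => mul_nonneg (hP0 b) (by split_ifs <;> norm_num)
    have hv1 : (∑ b, P b * (if f b ≤ y ∧ ¬ ι b then (1:ℝ) else 0)) ≤ 1 := by
      rw [← hP1]
      exact Finset.sum_le_sum fun b _ => by
        rcases (hP0 b) with h
        split_ifs <;> nlinarith
    have hFv : Real.exp γ * (∑ b, P b * (if f b ≤ y ∧ ¬ ι b then (1:ℝ) else 0)) ≤
        (K:ℝ) * (∑ b, q b * (if f b ≤ y then (1:ℝ) else 0)) := by
      rw [Finset.mul_sum, Finset.mul_sum]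
      refine Finset.sum_le_sum fun b _ => ?_
      by_cases h : f b ≤ y ∧ ¬ ι b
      · rw [if_pos h, if_pos h.1, mul_one, mul_one]
        have hc := hcm b h.2
        have hmul := mul_le_mul_of_nonneg_left hc (le_of_lt (Real.exp_pos γ))
        calc Real.exp γ * P b ≤ Real.exp γ * ((K:ℝ) * Real.exp (-γ) * q b) := hmul
          _ = (Real.exp γ * Real.exp (-γ)) * ((K:ℝ) * q b) := by ring
          _ = (K:ℝ) * q b := by rw [← Real.exp_add]; simp
      · rw [if_neg h, mul_zero, mul_zero]
        have hq := hq0 b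
        split_ifs <;> positivity
    have hchain := chain_bound K γ _ _ _ huF hu0 hv0 hv1 hFv
    have hsplit : 1 - (∑ b, P b * (if f b ≤ y ∧ ¬ ι b then (1:ℝ) else 0)) ≤
        (∑ b, P b * (if y < f b then (1:ℝ) else 0)) +
          (∑ b, P b * (if ι b then (1:ℝ) else 0)) := by
      have hper : ∀ b, P b ≤ P b * (if y < f b then (1:ℝ) else 0) +
          P b * (if ι b then (1:ℝ) else 0) +
          P b * (if f b ≤ y ∧ ¬ ι b then (1:ℝ) else 0) := by
        intro b
        have hPb := hP0 b
        rcases le_or_gt (f b) y with hA | hA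
        · by_cases hB : ι b
          · rw [if_neg (not_lt.mpr hA), if_pos hB, if_neg (by tauto)]; nlinarith
          · rw [if_neg (not_lt.mpr hA), if_neg hB, if_pos ⟨hA, hB⟩]; nlinarith
        · have h1 : ¬ (f b ≤ y) := not_le.mpr hA
          by_cases hB : ι b
          · rw [if_pos hA, if_pos hB, if_neg (by tauto)]; nlinarith
          · rw [if_pos hA, if_neg hB, if_neg (by tauto)]; nlinarith
      have := Finset.sum_le_sum (fun b (_ : b ∈ univ) => hper b)
      rw [hP1] at this
      rw [Finset.sum_add_distrib, Finset.sum_add_distrib] at this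
      linarith
    linarith
  -- integrability and conclusion
  have hGint : IntervalIntegrable (fun y => ∑ c : Fin K → B, (∏ k, q (c k)) *
      (if y < univ.inf' hne (fun k => f (c k)) then (1:ℝ) else 0)) volume 0 1 :=
    ii_sum (fun (c : Fin K → B) (y : ℝ) => (∏ k, q (c k)) *
        (if y < univ.inf' hne (fun k => f (c k)) then (1:ℝ) else 0))
      (fun c => (step_ii (univ.inf' hne fun k => f (c k))).const_mul (∏ k, q (c k)))
  have hHint : IntervalIntegrable (fun y => (∑ b, P b * (if y < f b then (1:ℝ) else 0)) +
      ((∑ b, P b * (if ι b then (1:ℝ) else 0)) + Real.exp (-Real.exp γ))) volume 0 1 :=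
    (ii_sum (fun (b : B) (y : ℝ) => P b * (if y < f b then (1:ℝ) else 0))
      (fun b => (step_ii (f b)).const_mul (P b))).add intervalIntegrable_const
  have hint := intervalIntegral.integral_mono_on zero_le_one hGint hHint fun y _ => hGH y
  have hH : (∫ y in (0:ℝ)..1, ((∑ b, P b * (if y < f b then (1:ℝ) else 0)) +
      ((∑ b, P b * (if ι b then (1:ℝ) else 0)) + Real.exp (-Real.exp γ))))
      = ∑ b, P b * f b +
        ((∑ b, P b * (if ι b then (1:ℝ) else 0)) + Real.exp (-Real.exp γ)) := by
    rw [intervalIntegral.integral_add (ii_sum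
      (fun (b : B) (y : ℝ) => P b * (if y < f b then (1:ℝ) else 0))
      (fun b => (step_ii (f b)).const_mul (P b))) intervalIntegrable_const]
    rw [intervalIntegral.integral_finset_sum (μ := volume) (a := (0:ℝ)) (b := 1)
      (s := (univ : Finset B))
      (f := fun (b : B) (y : ℝ) => P b * (if y < f b then (1:ℝ) else 0))
      (fun b _ => (step_ii (f b)).const_mul (P b))]
    rw [intervalIntegral.integral_const]
    congr 1
    · exact Finset.sum_congr rfl fun b _ => by
        rw [intervalIntegral.integral_const_mul, step_integral (hf0 b) (hf1 b)]
    · simp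
  rw [hLHS]
  calc (∫ y in (0:ℝ)..1, ∑ c : Fin K → B, (∏ k, q (c k)) *
          (if y < univ.inf' hne (fun k => f (c k)) then (1:ℝ) else 0))
      ≤ ∫ y in (0:ℝ)..1, ((∑ b, P b * (if y < f b then (1:ℝ) else 0)) +
          ((∑ b, P b * (if ι b then (1:ℝ) else 0)) + Real.exp (-Real.exp γ))) := hint
    _ = ∑ b, P b * f b + ((∑ b, P b * (if ι b then (1:ℝ) else 0)) + Real.exp (-Real.exp γ)) := hH
    _ = ∑ b, P b * f b + (∑ b, P b * (if ι b then (1:ℝ) else 0)) + Real.exp (-Real.exp γ) := by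
        ring

lemma perts {SS B : Type} [Fintype SS] [Fintype B] (K : ℕ) [NeZero K] (γ : ℝ)
    (hne : (univ : Finset (Fin K)).Nonempty)
    (j : SS → ℝ) (hj : ∀ s, 0 ≤ j s)
    (q P : B → ℝ) (D : SS → B → Prop) [∀ s b, Decidable (D s b)]
    (ι : B → Prop) [DecidablePred ι]
    (hq0 : ∀ b, 0 ≤ q b) (hq1 : ∑ b, q b = 1)
    (hP0 : ∀ b, 0 ≤ P b) (hP1 : ∑ b, P b = 1)
    (hcm : 0 < ∑ s, j s → ∀ b, ¬ ι b → P b ≤ K * Real.exp (-γ) * q b) :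
    ∑ c : Fin K → B, (∏ k, q (c k)) * ((∑ s, j s) * univ.inf' hne
        (fun k => (∑ s, if D s (c k) then j s else 0) / (∑ s, j s))) ≤
      (∑ s, ∑ b, j s * P b * (if D s b then 1 else 0))
      + (∑ s, ∑ b, j s * P b * (if ι b then 1 else 0))
      + (∑ s, j s) * Real.exp (-Real.exp γ) := by
  classical
  rcases (Finset.sum_nonneg fun s (_ : s ∈ univ) => hj s).eq_or_lt with hp | hp
  · -- p = 0
    have hj0 : ∀ s ∈ (univ : Finset SS), j s = 0 :=
      fun s hs => by
        have := (Finset.sum_eq_zero_iff_of_nonneg (fun s _ => hj s)).mp hp.symm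
        exact this s hs
    have h1 : ∑ s, j s = 0 := hp.symm
    rw [h1]
    have h2 : ∀ c : Fin K → B, (∏ k, q (c k)) * ((0:ℝ) * univ.inf' hne
        (fun k => (∑ s, if D s (c k) then j s else 0) / (0:ℝ))) = 0 := fun c => by ring
    rw [Finset.sum_congr rfl fun c _ => h2 c, Finset.sum_const, smul_zero, zero_mul]
    have h3 : ∀ s b, j s * P b * (if D s b then (1:ℝ) else 0) = 0 :=
      fun s b => by rw [hj0 s (Finset.mem_univ s)]; ring
    have h4 : ∀ s b, j s * P b * (if ι b then (1:ℝ) else 0) = 0 :=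
      fun s b => by rw [hj0 s (Finset.mem_univ s)]; ring
    simp only [h3, h4, Finset.sum_const_zero, add_zero, zero_add]
    norm_num
  · -- p > 0
    set p : ℝ := ∑ s, j s with hpdef
    have hf0 : ∀ b, 0 ≤ (∑ s, if D s b then j s else 0) / p :=
      fun b => div_nonneg (Finset.sum_nonneg fun s _ => by split_ifs <;> simp [hj s]) hp.le
    have hf1 : ∀ b, (∑ s, if D s b then j s else 0) / p ≤ 1 := fun b => by
      apply div_le_one_of_le₀
      · exact Finset.sum_le_sum fun s _ => by split_ifs <;> simp [hj s]
      · exact hp.le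
    have hcore : (∑ c : Fin K → B, (∏ k, q (c k)) * univ.inf' hne
          (fun k => (∑ s, if D s (c k) then j s else 0) / p)) ≤
        ∑ b, P b * ((∑ s, if D s b then j s else 0) / p) +
          ∑ b, P b * (if ι b then 1 else 0) + Real.exp (-Real.exp γ) :=
      core K γ hne q P (fun b => (∑ s, if D s b then j s else 0) / p) ι
        hq0 hq1 hP0 hP1 hf0 hf1 (hcm hp)
    have hlhs : ∑ c : Fin K → B, (∏ k, q (c k)) * (p * univ.inf' hne
        (fun k => (∑ s, if D s (c k) then j s else 0) / p)) =
        p * ∑ c : Fin K → B, (∏ k, q (c k)) * univ.inf' hne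
          (fun k => (∑ s, if D s (c k) then j s else 0) / p) := by
      rw [Finset.mul_sum]
      exact Finset.sum_congr rfl fun c _ => by ring
    rw [hlhs]
    have hstep := mul_le_mul_of_nonneg_left hcore hp.le
    refine le_trans hstep ?_
    have hNb : ∀ b : B, p * (P b * ((∑ s, if D s b then j s else 0) / p)) =
        P b * (∑ s, if D s b then j s else 0) := fun b => by
      field_simp
    have e1 : p * (∑ b, P b * ((∑ s, if D s b then j s else 0) / p)) =
        ∑ s, ∑ b, j s * P b * (if D s b then 1 else 0) := by
      rw [Finset.mul_sum, Finset.sum_congr rfl fun b (_ : b ∈ univ) => hNb b]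
      rw [Finset.sum_congr rfl fun b (_ : b ∈ univ) => Finset.mul_sum (univ) _ (P b)]
      rw [Finset.sum_comm]
      exact Finset.sum_congr rfl fun s _ => Finset.sum_congr rfl fun b _ => by
        split_ifs <;> ring
    have e2 : p * (∑ b, P b * (if ι b then (1:ℝ) else 0)) =
        ∑ s, ∑ b, j s * P b * (if ι b then 1 else 0) := by
      rw [hpdef, Finset.sum_mul]
      exact Finset.sum_congr rfl fun s _ => by
        rw [Finset.mul_sum]
        exact Finset.sum_congr rfl fun b _ => by ring
    have hre : p * (∑ b, P b * ((∑ s, if D s b then j s else 0) / p) +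
          ∑ b, P b * (if ι b then (1:ℝ) else 0) + Real.exp (-Real.exp γ))
        = p * (∑ b, P b * ((∑ s, if D s b then j s else 0) / p)) +
          p * (∑ b, P b * (if ι b then 1 else 0)) + p * Real.exp (-Real.exp γ) := by ring
    rw [hre, e1, e2]



set_option maxHeartbeats 2000000

/-- excess-distortion random-coding bound. With `X^n` i.i.d. from `P_X`,
`K` codewords drawn conditionally i.i.d. from `P_{Z|X}^n` given `X^n` (independent of
`T^n`), and the minimum-excess-probability estimator, there exists a (realized) codebook
`C` such that the excess-distortion probability satisfies
`ε ≤ P[d(S^n,Z^n) > d] + P[i(T^n;Z^n|X^n) > log K − γ] + exp(−exp γ)`, where on the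
right-hand side `Z^n ~ P_{Z|XT}^n` given `(X^n,T^n)` and `i` is the conditional
information density. -/
theorem stmt16 {X S T Z : Type} [Fintype X] [Fintype S] [Fintype T] [Fintype Z]
    (n K : ℕ) (hn : 0 < n) [NeZero K]
    (pX : X → ℝ) (pS : S → ℝ) (PT : X → S → T → ℝ) (PZ : X → T → Z → ℝ)
    (d : S → Z → ℝ) (dthr γ : ℝ)
    (hpX : ∀ x, 0 ≤ pX x) (hpXsum : ∑ x, pX x = 1)
    (hpS : ∀ s, 0 ≤ pS s) (hpSsum : ∑ s, pS s = 1)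
    (hPT : ∀ x s t, 0 ≤ PT x s t) (hPTsum : ∀ x s, ∑ t, PT x s t = 1)
    (hPZ : ∀ x t z, 0 ≤ PZ x t z) (hPZsum : ∀ x t, ∑ z, PZ x t z = 1)
    (hd : ∀ s z, 0 ≤ d s z) :
    -- memoryless joint law of (X^n, S^n, T^n)
    let jointn : (Fin n → X) → (Fin n → S) → (Fin n → T) → ℝ := fun xs ss ts =>
      ∏ i, pX (xs i) * pS (ss i) * PT (xs i) (ss i) (ts i)
    -- per-block (average) distortion
    let dn : (Fin n → S) → (Fin n → Z) → ℝ := fun ss zs => (∑ i, d (ss i) (zs i)) / n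
    -- marginal of (X^n, T^n)
    let pXTn : (Fin n → X) → (Fin n → T) → ℝ := fun xs ts => ∑ ss, jointn xs ss ts
    -- π(t^n, z^n, x^n) = P[d(S^n,z^n) > d | X^n = x^n, T^n = t^n]
    let π : (Fin n → T) → (Fin n → Z) → (Fin n → X) → ℝ := fun ts zs xs =>
      (∑ ss, if dn ss zs > dthr then jointn xs ss ts else 0) / pXTn xs ts
    -- marginal channel P_{T|X} and induced marginal P_{Z|X}
    let pTX : X → T → ℝ := fun x t => ∑ s, pS s * PT x s t
    let pZX : X → Z → ℝ := fun x z => ∑ t, pTX x t * PZ x t z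
    -- conditional information density i(t^n; z^n | x^n)
    let iDen : (Fin n → X) → (Fin n → T) → (Fin n → Z) → ℝ := fun xs ts zs =>
      ∑ i, Real.log (PZ (xs i) (ts i) (zs i) / pZX (xs i) (zs i))
    ∃ C : (Fin n → X) → Fin K → (Fin n → Z),
      -- excess-distortion probability of the minimum-excess-probability estimator
      (∑ xs, ∑ ts, pXTn xs ts *
          Finset.univ.inf' Finset.univ_nonempty (fun k => π ts (C xs k) xs)) ≤
        -- P[d(S^n, Z^n) > d] with Z^n ~ P_{Z|XT}^n
        (∑ xs, ∑ ss, ∑ ts, ∑ zs : Fin n → Z,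
          jointn xs ss ts * (∏ i, PZ (xs i) (ts i) (zs i)) *
            (if dn ss zs > dthr then 1 else 0)) +
        -- P[i(T^n;Z^n|X^n) > log K − γ]
        (∑ xs, ∑ ss, ∑ ts, ∑ zs : Fin n → Z,
          jointn xs ss ts * (∏ i, PZ (xs i) (ts i) (zs i)) *
            (if iDen xs ts zs > Real.log K - γ then 1 else 0)) +
        Real.exp (-Real.exp γ) := by
  intro jointn dn pXTn π pTX pZX iDen
  classical
  -- nonemptiness
  have hXne : Nonempty X := by
    by_contra h; rw [not_nonempty_iff] at h
    rw [Finset.univ_eq_empty, Finset.sum_empty] at hpXsum; exact one_ne_zero hpXsum.symm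
  have hSne : Nonempty S := by
    by_contra h; rw [not_nonempty_iff] at h
    rw [Finset.univ_eq_empty, Finset.sum_empty] at hpSsum; exact one_ne_zero hpSsum.symm
  have hTne : Nonempty T := by
    by_contra h; rw [not_nonempty_iff] at h
    have := hPTsum (Classical.arbitrary X) (Classical.arbitrary S)
    rw [Finset.univ_eq_empty, Finset.sum_empty] at this; exact one_ne_zero this.symm
  have hZne : Nonempty Z := by
    by_contra h; rw [not_nonempty_iff] at h
    have := hPZsum (Classical.arbitrary X) (Classical.arbitrary T)
    rw [Finset.univ_eq_empty, Finset.sum_empty] at this; exact one_ne_zero this.symm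
  -- basic facts about the marginals
  have hpTX0 : ∀ x t, 0 ≤ pTX x t :=
    fun x t => Finset.sum_nonneg fun s _ => mul_nonneg (hpS s) (hPT x s t)
  have hpTXsum : ∀ x, ∑ t, pTX x t = 1 := by
    intro x
    show ∑ t, ∑ s, pS s * PT x s t = 1
    rw [Finset.sum_comm]
    rw [Finset.sum_congr rfl fun s (_ : s ∈ univ) => by
      rw [← Finset.mul_sum, hPTsum x s, mul_one]]
    exact hpSsum
  have hpZX0 : ∀ x z, 0 ≤ pZX x z :=
    fun x z => Finset.sum_nonneg fun t _ => mul_nonneg (hpTX0 x t) (hPZ x t z)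
  have hpZXsum : ∀ x, ∑ z, pZX x z = 1 := by
    intro x
    show ∑ z, ∑ t, pTX x t * PZ x t z = 1
    rw [Finset.sum_comm]
    rw [Finset.sum_congr rfl fun t (_ : t ∈ univ) => by
      rw [← Finset.mul_sum, hPZsum x t, mul_one]]
    exact hpTXsum x
  have hqsum : ∀ xs : Fin n → X, ∑ zs : Fin n → Z, ∏ i, pZX (xs i) (zs i) = 1 := by
    intro xs
    rw [sum_fn_prod (fun i z => pZX (xs i) z)]
    exact Finset.prod_eq_one fun i _ => hpZXsum (xs i)
  have hPprod0 : ∀ (xs : Fin n → X) (ts : Fin n → T) (zs : Fin n → Z),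
      0 ≤ ∏ i, PZ (xs i) (ts i) (zs i) :=
    fun xs ts zs => Finset.prod_nonneg fun i _ => hPZ _ _ _
  have hPsum : ∀ (xs : Fin n → X) (ts : Fin n → T),
      ∑ zs : Fin n → Z, ∏ i, PZ (xs i) (ts i) (zs i) = 1 := by
    intro xs ts
    rw [sum_fn_prod (fun i z => PZ (xs i) (ts i) z)]
    exact Finset.prod_eq_one fun i _ => hPZsum (xs i) (ts i)
  have hjoint0 : ∀ xs ss ts, 0 ≤ jointn xs ss ts :=
    fun xs ss ts => Finset.prod_nonneg fun i _ =>
      mul_nonneg (mul_nonneg (hpX _) (hpS _)) (hPT _ _ _)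
  have hp0 : ∀ xs ts, 0 ≤ pXTn xs ts :=
    fun xs ts => Finset.sum_nonneg fun ss _ => hjoint0 xs ss ts
  -- positivity of pTX along positive-probability (xs,ts)
  have hposT : ∀ xs ts, 0 < pXTn xs ts → ∀ i, 0 < pTX (xs i) (ts i) := by
    intro xs ts hp i
    have hex : ∃ ss, 0 < jointn xs ss ts := by
      by_contra h
      push_neg at h
      have hz : pXTn xs ts = 0 :=
        Finset.sum_eq_zero fun ss _ => le_antisymm (h ss) (hjoint0 xs ss ts)
      rw [hz] at hp; exact lt_irrefl 0 hp
    obtain ⟨ss, hss⟩ := hex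
    have hfac : pX (xs i) * pS (ss i) * PT (xs i) (ss i) (ts i) ≠ 0 := by
      intro h0
      exact ne_of_gt hss (Finset.prod_eq_zero (Finset.mem_univ i) h0)
    have hfacpos : 0 < pX (xs i) * pS (ss i) * PT (xs i) (ss i) (ts i) :=
      lt_of_le_of_ne (mul_nonneg (mul_nonneg (hpX _) (hpS _)) (hPT _ _ _)) (Ne.symm hfac)
    have h2 : 0 < pS (ss i) * PT (xs i) (ss i) (ts i) := by
      rcases (mul_nonneg (hpS (ss i)) (hPT (xs i) (ss i) (ts i))).lt_or_eq with h | h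
      · exact h
      · exfalso; rw [mul_assoc, ← h, mul_zero] at hfacpos; exact lt_irrefl 0 hfacpos
    refine lt_of_lt_of_le h2 ?_
    exact Finset.single_le_sum (f := fun s => pS s * PT (xs i) s (ts i))
      (fun s _ => mul_nonneg (hpS s) (hPT _ _ _)) (Finset.mem_univ (ss i))
  -- change of measure
  have hKpos : (0:ℝ) < (K:ℝ) := by
    exact_mod_cast Nat.pos_of_ne_zero (NeZero.ne K)
  have hcm : ∀ xs ts, 0 < pXTn xs ts → ∀ zs : Fin n → Z,
      ¬(iDen xs ts zs > Real.log K - γ) →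
      (∏ i, PZ (xs i) (ts i) (zs i)) ≤ K * Real.exp (-γ) * ∏ i, pZX (xs i) (zs i) := by
    intro xs ts hp zs hι
    by_cases hz : ∀ i, 0 < PZ (xs i) (ts i) (zs i)
    · have hq : ∀ i, 0 < pZX (xs i) (zs i) := by
        intro i
        refine lt_of_lt_of_le (mul_pos (hposT xs ts hp i) (hz i)) ?_
        exact Finset.single_le_sum (f := fun t => pTX (xs i) t * PZ (xs i) t (zs i))
          (fun t _ => mul_nonneg (hpTX0 _ _) (hPZ _ _ _)) (Finset.mem_univ (ts i))
      have hExp : Real.exp (iDen xs ts zs) =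
          ∏ i, (PZ (xs i) (ts i) (zs i) / pZX (xs i) (zs i)) := by
        rw [show iDen xs ts zs =
          ∑ i, Real.log (PZ (xs i) (ts i) (zs i) / pZX (xs i) (zs i)) from rfl]
        rw [Real.exp_sum]
        exact Finset.prod_congr rfl fun i _ => Real.exp_log (div_pos (hz i) (hq i))
      have key : ∏ i, PZ (xs i) (ts i) (zs i) =
          (∏ i, pZX (xs i) (zs i)) * Real.exp (iDen xs ts zs) := by
        rw [hExp, ← Finset.prod_mul_distrib]
        exact Finset.prod_congr rfl fun i _ => by
          rw [mul_comm, div_mul_cancel₀ _ (ne_of_gt (hq i))]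
      rw [key]
      have hE : Real.exp (iDen xs ts zs) ≤ (K:ℝ) * Real.exp (-γ) := by
        have h1 : iDen xs ts zs ≤ Real.log K - γ := not_lt.mp hι
        calc Real.exp (iDen xs ts zs) ≤ Real.exp (Real.log K - γ) := Real.exp_le_exp.mpr h1
          _ = (K:ℝ) * Real.exp (-γ) := by
            rw [Real.exp_sub, Real.exp_log hKpos, Real.exp_neg, div_eq_mul_inv]
      calc (∏ i, pZX (xs i) (zs i)) * Real.exp (iDen xs ts zs)
          ≤ (∏ i, pZX (xs i) (zs i)) * ((K:ℝ) * Real.exp (-γ)) :=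
            mul_le_mul_of_nonneg_left hE (Finset.prod_nonneg fun i _ => hpZX0 _ _)
        _ = (K:ℝ) * Real.exp (-γ) * ∏ i, pZX (xs i) (zs i) := by ring
    · push_neg at hz
      obtain ⟨i, hi⟩ := hz
      have hi0 : PZ (xs i) (ts i) (zs i) = 0 := le_antisymm hi (hPZ _ _ _)
      rw [Finset.prod_eq_zero (Finset.mem_univ i) hi0]
      have : (0:ℝ) ≤ (K:ℝ) * Real.exp (-γ) * ∏ i, pZX (xs i) (zs i) := by
        apply mul_nonneg (mul_nonneg hKpos.le (Real.exp_nonneg _))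
        exact Finset.prod_nonneg fun i _ => hpZX0 _ _
      exact this
  -- per-xs codebook existence
  have key : ∀ xs : Fin n → X, ∃ c : Fin K → (Fin n → Z),
      (∑ ts, pXTn xs ts * Finset.univ.inf' Finset.univ_nonempty
          (fun k => π ts (c k) xs)) ≤
        (∑ ss, ∑ ts, ∑ zs : Fin n → Z,
          jointn xs ss ts * (∏ i, PZ (xs i) (ts i) (zs i)) *
            (if dn ss zs > dthr then 1 else 0)) +
        (∑ ss, ∑ ts, ∑ zs : Fin n → Z,
          jointn xs ss ts * (∏ i, PZ (xs i) (ts i) (zs i)) *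
            (if iDen xs ts zs > Real.log K - γ then 1 else 0)) +
        (∑ ts, pXTn xs ts) * Real.exp (-Real.exp γ) := by
    intro xs
    obtain ⟨c, hc⟩ := exists_le_avg (A := Fin K → (Fin n → Z))
      (W := fun c => ∏ k, ∏ i, pZX (xs i) (c k i))
      (F := fun c => ∑ ts, pXTn xs ts * Finset.univ.inf' Finset.univ_nonempty
        (fun k => π ts (c k) xs))
      (fun c => Finset.prod_nonneg fun k _ => Finset.prod_nonneg fun i _ => hpZX0 _ _)
      (by
        rw [sum_fn_prod (fun (k : Fin K) (zs : Fin n → Z) => ∏ i, pZX (xs i) (zs i))]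
        exact Finset.prod_eq_one fun k _ => hqsum xs)
    refine ⟨c, le_trans hc ?_⟩
    have hswap : (∑ c' : Fin K → Fin n → Z, (∏ k, ∏ i, pZX (xs i) (c' k i)) *
        (∑ ts, pXTn xs ts * Finset.univ.inf' Finset.univ_nonempty
          (fun k => π ts (c' k) xs))) =
        ∑ ts, ∑ c' : Fin K → Fin n → Z, (∏ k, ∏ i, pZX (xs i) (c' k i)) *
          (pXTn xs ts * Finset.univ.inf' Finset.univ_nonempty
            (fun k => π ts (c' k) xs)) := by
      rw [Finset.sum_congr rfl fun c' (_ : c' ∈ univ) => Finset.mul_sum univ _ _]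
      exact Finset.sum_comm
    rw [hswap]
    have hts : ∀ ts : Fin n → T,
        (∑ c' : Fin K → Fin n → Z, (∏ k, ∏ i, pZX (xs i) (c' k i)) *
          (pXTn xs ts * Finset.univ.inf' Finset.univ_nonempty
            (fun k => π ts (c' k) xs))) ≤
        (∑ ss, ∑ zs : Fin n → Z,
          jointn xs ss ts * (∏ i, PZ (xs i) (ts i) (zs i)) *
            (if dn ss zs > dthr then 1 else 0)) +
        (∑ ss, ∑ zs : Fin n → Z,
          jointn xs ss ts * (∏ i, PZ (xs i) (ts i) (zs i)) *
            (if iDen xs ts zs > Real.log K - γ then 1 else 0)) +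
        pXTn xs ts * Real.exp (-Real.exp γ) := by
      intro ts
      exact perts (SS := Fin n → S) (B := Fin n → Z) K γ Finset.univ_nonempty
        (fun ss => jointn xs ss ts) (fun ss => hjoint0 xs ss ts)
        (fun zs => ∏ i, pZX (xs i) (zs i)) (fun zs => ∏ i, PZ (xs i) (ts i) (zs i))
        (fun ss zs => dn ss zs > dthr) (fun zs => iDen xs ts zs > Real.log K - γ)
        (fun zs => Finset.prod_nonneg fun i _ => hpZX0 _ _) (hqsum xs)
        (fun zs => hPprod0 xs ts zs) (hPsum xs ts)
        (fun hp => hcm xs ts hp)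
    refine le_trans (Finset.sum_le_sum fun ts (_ : ts ∈ univ) => hts ts) (le_of_eq ?_)
    rw [Finset.sum_add_distrib, Finset.sum_add_distrib]
    congr 1
    · congr 1
      · exact Finset.sum_comm
      · exact Finset.sum_comm
    · exact (Finset.sum_mul _ _ _).symm
  choose C hC using key
  refine ⟨C, ?_⟩
  -- total probability is one
  have hrowT : ∀ (xs : Fin n → X) (ss : Fin n → S),
      ∑ ts : Fin n → T, jointn xs ss ts = ∏ i, pX (xs i) * pS (ss i) := by
    intro xs ss
    have h1 : ∑ ts : Fin n → T, ∏ i, (pX (xs i) * pS (ss i) * PT (xs i) (ss i) (ts i)) =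
        ∏ i, ∑ t, (pX (xs i) * pS (ss i) * PT (xs i) (ss i) t) :=
      sum_fn_prod (fun i t => pX (xs i) * pS (ss i) * PT (xs i) (ss i) t)
    calc ∑ ts : Fin n → T, jointn xs ss ts
        = ∏ i, ∑ t, (pX (xs i) * pS (ss i) * PT (xs i) (ss i) t) := h1
      _ = ∏ i, pX (xs i) * pS (ss i) := Finset.prod_congr rfl fun i _ => by
          rw [← Finset.mul_sum, hPTsum, mul_one]
  have hrowS : ∀ xs : Fin n → X,
      ∑ ss : Fin n → S, ∏ i, pX (xs i) * pS (ss i) = ∏ i, pX (xs i) := by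
    intro xs
    rw [sum_fn_prod (fun i s => pX (xs i) * pS s)]
    exact Finset.prod_congr rfl fun i _ => by rw [← Finset.mul_sum, hpSsum, mul_one]
  have htotal : ∑ xs : Fin n → X, ∑ ts : Fin n → T, pXTn xs ts = 1 := by
    have h1 : ∀ xs : Fin n → X, ∑ ts : Fin n → T, pXTn xs ts = ∏ i, pX (xs i) := by
      intro xs
      calc ∑ ts : Fin n → T, pXTn xs ts
          = ∑ ts : Fin n → T, ∑ ss : Fin n → S, jointn xs ss ts := rfl
        _ = ∑ ss : Fin n → S, ∑ ts : Fin n → T, jointn xs ss ts := Finset.sum_comm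
        _ = ∑ ss : Fin n → S, ∏ i, pX (xs i) * pS (ss i) :=
            Finset.sum_congr rfl fun ss _ => hrowT xs ss
        _ = ∏ i, pX (xs i) := hrowS xs
    rw [Finset.sum_congr rfl fun xs (_ : xs ∈ univ) => h1 xs]
    rw [sum_fn_prod (fun i x => pX x)]
    exact Finset.prod_eq_one fun i _ => hpXsum
  refine le_trans (Finset.sum_le_sum fun xs (_ : xs ∈ univ) => hC xs) (le_of_eq ?_)
  rw [Finset.sum_add_distrib, Finset.sum_add_distrib]
  congr 1
  rw [← Finset.sum_mul, htotal, one_mul]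
end

section
/- Backward-channel expectation identity used in the converse: for W uniformizable over [K] with encoder P_{W|XT}(w|x,t) ≤ 1 and decoder P_{Z|W}, and j(t|z,x) = log(dP_{T|ZX}(t|z,x)/dP_{T|X}(t|x)), one has E[exp(j(T|Z,X))] ≤ K, where the expectation is over the joint law of (X,T,W,Z). -/
open Finset

/-- backward-channel expectation identity used in the converse. For
`W ∈ [K]` with encoder `P_{W|XT}(w|x,t) ≤ 1` and decoder `P_{Z|W}`, and
`j(t|z,x) = log(P_{T|ZX}(t|z,x)/P_{T|X}(t|x))`, one has `E[exp(j(T|Z,X))] ≤ K`, the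
expectation being over the joint law of `(X,T,W,Z)`. -/
theorem stmt19 {X T Z : Type} [Fintype X] [Fintype T] [Fintype Z]
    (K : ℕ) (hK : 0 < K)
    (pX : X → ℝ) (pTX : X → T → ℝ)
    (enc : X → T → Fin K → ℝ) (dec : Fin K → Z → ℝ)
    (hpX : ∀ x, 0 ≤ pX x) (hpXsum : ∑ x, pX x = 1)
    (hpTX : ∀ x t, 0 ≤ pTX x t) (hpTXsum : ∀ x, ∑ t, pTX x t = 1)
    (henc : ∀ x t w, 0 ≤ enc x t w) (hencsum : ∀ x t, ∑ w, enc x t w = 1)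
    (hdec : ∀ w z, 0 ≤ dec w z) (hdecsum : ∀ w, ∑ z, dec w z = 1) :
    -- joint law of (X,T,W,Z)
    let joint : X → T → Fin K → Z → ℝ := fun x t w z =>
      pX x * pTX x t * enc x t w * dec w z
    -- marginal of (X,Z) and backward conditional P_{T|ZX}
    let pXZ : X → Z → ℝ := fun x z => ∑ t, ∑ w, joint x t w z
    let pTZX : X → Z → T → ℝ := fun x z t => (∑ w, joint x t w z) / pXZ x z
    -- information density j(t|z,x)
    let j : X → Z → T → ℝ := fun x z t => Real.log (pTZX x z t / pTX x t)
    (∑ x, ∑ t, ∑ w, ∑ z, joint x t w z * Real.exp (j x z t)) ≤ (K : ℝ) := by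
  intro joint pXZ pTZX j
  have hjoint : ∀ x t w z, 0 ≤ joint x t w z := fun x t w z => by
    have := hpX x; have := hpTX x t; have := henc x t w; have := hdec w z
    positivity
  have hpTZX : ∀ x z t, 0 ≤ pTZX x z t := fun x z t => by
    apply div_nonneg
    · exact Finset.sum_nonneg fun w _ => hjoint x t w z
    · exact Finset.sum_nonneg fun t _ => Finset.sum_nonneg fun w _ => hjoint x t w z
  have henc1 : ∀ x t w, enc x t w ≤ 1 := fun x t w => by
    rw [← hencsum x t]
    exact Finset.single_le_sum (fun w _ => henc x t w) (Finset.mem_univ w)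
  -- pointwise bound
  have key : ∀ x t w z, joint x t w z * Real.exp (j x z t)
      ≤ pX x * dec w z * pTZX x z t := by
    intro x t w z
    rcases eq_or_lt_of_le (hjoint x t w z) with h0 | hpos
    · rw [← h0, zero_mul]
      have := hpX x; have := hdec w z; have := hpTZX x z t
      positivity
    · -- joint > 0 : all factors positive
      have hpXpos : 0 < pX x := by
        rcases (hpX x).lt_or_eq with h | h; · exact h
        exfalso; simp only [joint, ← h, zero_mul] at hpos; exact lt_irrefl 0 hpos
      have hpTXpos : 0 < pTX x t := by
        rcases (hpTX x t).lt_or_eq with h | h; · exact h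
        exfalso; simp only [joint, ← h, mul_zero, zero_mul] at hpos; exact lt_irrefl 0 hpos
      have hsumw : 0 < ∑ w', joint x t w' z :=
        lt_of_lt_of_le hpos (Finset.single_le_sum (fun w' _ => hjoint x t w' z)
          (Finset.mem_univ w))
      have hpXZpos : 0 < pXZ x z :=
        lt_of_lt_of_le hsumw (Finset.single_le_sum
          (fun t' _ => Finset.sum_nonneg fun w' _ => hjoint x t' w' z) (Finset.mem_univ t))
      have hpTZXpos : 0 < pTZX x z t := div_pos hsumw hpXZpos
      have hratio : 0 < pTZX x z t / pTX x t := div_pos hpTZXpos hpTXpos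
      have hexp : Real.exp (j x z t) = pTZX x z t / pTX x t := Real.exp_log hratio
      rw [hexp]
      have heq : joint x t w z * (pTZX x z t / pTX x t)
          = pX x * enc x t w * dec w z * pTZX x z t := by
        show pX x * pTX x t * enc x t w * dec w z * (pTZX x z t / pTX x t) = _
        field_simp
      rw [heq]
      have : pX x * enc x t w * dec w z * pTZX x z t
          ≤ pX x * 1 * dec w z * pTZX x z t := by
        have := hdec w z; have := hpTZX x z t
        gcongr
        exact henc1 x t w
      simpa using this
  -- sum of conditional ≤ 1
  have hcond : ∀ x z, ∑ t, pTZX x z t ≤ 1 := by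
    intro x z
    have : ∑ t, pTZX x z t = (∑ t, ∑ w, joint x t w z) / pXZ x z := by
      simp only [pTZX, Finset.sum_div]
    rw [this]
    rcases eq_or_lt_of_le (Finset.sum_nonneg fun t _ =>
        Finset.sum_nonneg fun w _ => hjoint x t w z : (0:ℝ) ≤ ∑ t, ∑ w, joint x t w z)
      with h | h
    · rw [← h, zero_div]; norm_num
    · have : pXZ x z = ∑ t, ∑ w, joint x t w z := rfl
      rw [this, div_self (ne_of_gt h)]
  calc ∑ x, ∑ t, ∑ w, ∑ z, joint x t w z * Real.exp (j x z t)
      ≤ ∑ x, ∑ t, ∑ w, ∑ z, pX x * dec w z * pTZX x z t := by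
        apply Finset.sum_le_sum; intro x _
        apply Finset.sum_le_sum; intro t _
        apply Finset.sum_le_sum; intro w _
        apply Finset.sum_le_sum; intro z _
        exact key x t w z
    _ = ∑ x, pX x * ∑ w, ∑ z, dec w z * ∑ t, pTZX x z t := by
        congr 1; ext x
        rw [Finset.mul_sum]
        rw [Finset.sum_comm]
        congr 1; ext w
        rw [Finset.mul_sum, Finset.sum_comm]
        congr 1; ext z
        rw [Finset.mul_sum, Finset.mul_sum]
        congr 1; ext t
        ring
    _ ≤ ∑ x, pX x * ∑ w : Fin K, ∑ z, dec w z * 1 := by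
        apply Finset.sum_le_sum; intro x _
        apply mul_le_mul_of_nonneg_left _ (hpX x)
        apply Finset.sum_le_sum; intro w _
        apply Finset.sum_le_sum; intro z _
        exact mul_le_mul_of_nonneg_left (hcond x z) (hdec w z)
    _ = (K : ℝ) := by
        simp only [mul_one, hdecsum]
        rw [Finset.sum_const, Finset.card_univ, Fintype.card_fin, nsmul_eq_mul, mul_one]
        rw [← Finset.sum_mul, hpXsum, one_mul]
end
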